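/- Assume |w_b| + |w_f| < 1 and k ≥ 1. There exists a sequence of polynomial functions (A_i)_{i ≥ 0} from ℂ to ℂ with A₀(x) = x^k and, for every i ≥ 0 and every complex x, 2·A_{i+1}(x²) = w_b·(A_i(x) + A_i(−x)) + w_f·x²·(A_i(x⁶) − A_i(−x⁶)) + 2·x^(2k); moreover, for any such sequence, A_i converges uniformly on the open unit disc to the unique solution f of the Collatz functional equation for (k, w_b, w_f). -/

import Mathlib

/-- The open unit disc in `ℂ`. -/
def openUnitDisc : Set ℂ := {z : ℂ | ‖z‖ < 1}

/-- `f` is a solution of the Collatz functional equation for `(k, wb, wf)`: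
it is analytic and bounded on the open unit disc and satisfies the functional equation
`2 f(x²) = wb (f(x) + f(−x)) + wf x² (f(x⁶) − f(−x⁶)) + 2 x^(2k)` there. -/
def IsSolution (k : ℕ) (wb wf : ℝ) (f : ℂ → ℂ) : Prop :=
  AnalyticOnNhd ℂ f openUnitDisc ∧
  (∃ C : ℝ, ∀ z ∈ openUnitDisc, ‖f z‖ ≤ C) ∧
  ∀ x : ℂ, ‖x‖ < 1 →
    2 * f (x ^ 2) =
      (wb : ℂ) * (f x + f (-x)) + (wf : ℂ) * x ^ 2 * (f (x ^ 6) - f (-x ^ 6)) +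
        2 * x ^ (2 * k)

/-- `a` is the sequence of Taylor coefficients of `f` at `0`:
`f x = Σ aₙ xⁿ` on the open unit disc. -/
def HasCoeffs (f : ℂ → ℂ) (a : ℕ → ℂ) : Prop :=
  ∀ x : ℂ, ‖x‖ < 1 → HasSum (fun n => a n * x ^ n) (f x)

open Polynomial Filter


lemma isOpen_openUnitDisc : IsOpen openUnitDisc :=
  isOpen_lt continuous_norm continuous_const

lemma exists_sqrt (y : ℂ) : ∃ x : ℂ, x ^ 2 = y ∧ ‖x‖ ^ 2 = ‖y‖ := by
  refine ⟨y ^ ((2:ℕ):ℂ)⁻¹, Complex.cpow_nat_inv_pow y two_ne_zero, ?_⟩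
  rw [← norm_pow, Complex.cpow_nat_inv_pow y two_ne_zero]

lemma sqrt_lt_one {x : ℂ} (h2 : ‖x‖ ^ 2 < 1) : ‖x‖ < 1 := by
  nlinarith [norm_nonneg x]

lemma rhs_bound {wb wf : ℝ} {x a b c d : ℂ} {M : ℝ} (hx : ‖x‖ < 1)
    (ha : ‖a‖ ≤ M) (hb : ‖b‖ ≤ M) (hc : ‖c‖ ≤ M)
    (hd : ‖d‖ ≤ M) (hM : 0 ≤ M) :
    ‖(wb:ℂ) * (a + b) + (wf:ℂ) * x ^ 2 * (c - d)‖ ≤ (|wb| + |wf|) * (2 * M) := by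
  have h1 : ‖(wb:ℂ) * (a + b)‖ ≤ |wb| * (2 * M) := by
    rw [norm_mul, Complex.norm_real, Real.norm_eq_abs]
    have h : ‖a + b‖ ≤ 2 * M := le_trans (norm_add_le a b) (by linarith)
    have := mul_le_mul_of_nonneg_left h (abs_nonneg wb)
    linarith
  have h2 : ‖(wf:ℂ) * x ^ 2 * (c - d)‖ ≤ |wf| * (2 * M) := by
    rw [norm_mul, norm_mul, Complex.norm_real, Real.norm_eq_abs, norm_pow]
    have hcd : ‖c - d‖ ≤ 2 * M := by
      calc ‖c - d‖ ≤ ‖c‖ + ‖d‖ := norm_sub_le c d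
        _ ≤ 2 * M := by linarith
    have hx2 : ‖x‖ ^ 2 ≤ 1 := by nlinarith [norm_nonneg x]
    have hXC : ‖x‖ ^ 2 * ‖c - d‖ ≤ 1 * (2 * M) :=
      mul_le_mul hx2 hcd (norm_nonneg _) zero_le_one
    calc |wf| * ‖x‖ ^ 2 * ‖c - d‖
        = |wf| * (‖x‖ ^ 2 * ‖c - d‖) := by ring
      _ ≤ |wf| * (1 * (2 * M)) := mul_le_mul_of_nonneg_left hXC (abs_nonneg wf)
      _ = |wf| * (2 * M) := by ring
  calc ‖(wb:ℂ) * (a + b) + (wf:ℂ) * x ^ 2 * (c - d)‖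
      ≤ ‖(wb:ℂ) * (a + b)‖ + ‖(wf:ℂ) * x ^ 2 * (c - d)‖ :=
        norm_add_le _ _
    _ ≤ (|wb| + |wf|) * (2 * M) := by linarith

lemma even_eval (p : Polynomial ℂ) (x : ℂ) :
    2 * (∑ n ∈ p.support.filter (fun n => Even n), C (p.coeff n) * X ^ (n / 2)).eval (x^2)
    = p.eval x + p.eval (-x) := by
  rw [Polynomial.eval_finset_sum, Finset.sum_filter, Finset.mul_sum,
    Polynomial.eval_eq_sum, Polynomial.eval_eq_sum, Polynomial.sum_def, Polynomial.sum_def,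
    ← Finset.sum_add_distrib]
  refine Finset.sum_congr rfl fun n _ => ?_
  by_cases h : Even n
  · simp only [h, if_true, eval_mul, eval_C, eval_pow, eval_X, ← pow_mul, h.neg_pow]
    rw [Nat.mul_div_cancel' h.two_dvd]; ring
  · rw [if_neg h, (Nat.not_even_iff_odd.1 h).neg_pow]; ring

lemma odd_eval (p : Polynomial ℂ) (x : ℂ) :
    2 * (∑ n ∈ p.support.filter (fun n => Odd n), C (p.coeff n) * X ^ (3 * n + 1)).eval (x^2)
    = x^2 * (p.eval (x^6) - p.eval (-x^6)) := by
  rw [Polynomial.eval_finset_sum, Finset.sum_filter, Finset.mul_sum,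
    Polynomial.eval_eq_sum, Polynomial.eval_eq_sum, Polynomial.sum_def, Polynomial.sum_def,
    ← Finset.sum_sub_distrib, Finset.mul_sum]
  refine Finset.sum_congr rfl fun n _ => ?_
  by_cases h : Odd n
  · simp only [h, if_true, eval_mul, eval_C, eval_pow, eval_X, ← pow_mul, h.neg_pow]
    have h2 : 2 * (3 * n + 1) = 6 * n + 2 := by ring
    rw [h2, pow_add]
    ring
  · rw [if_neg h, (Nat.not_odd_iff_even.1 h).neg_pow]; ring

noncomputable def cstep (k : ℕ) (wb wf : ℝ) (p : Polynomial ℂ) : Polynomial ℂ :=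
  C (wb:ℂ) * (∑ n ∈ p.support.filter (fun n => Even n), C (p.coeff n) * X ^ (n / 2))
  + C (wf:ℂ) * (∑ n ∈ p.support.filter (fun n => Odd n), C (p.coeff n) * X ^ (3 * n + 1))
  + X ^ k

noncomputable def cseq (k : ℕ) (wb wf : ℝ) : ℕ → Polynomial ℂ
  | 0 => X ^ k
  | (i+1) => cstep k wb wf (cseq k wb wf i)

noncomputable def cB (k : ℕ) (wb wf : ℝ) (i : ℕ) (x : ℂ) : ℂ := (cseq k wb wf i).eval x

lemma cB_zero (k : ℕ) (wb wf : ℝ) (x : ℂ) : cB k wb wf 0 x = x ^ k := by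
  simp [cB, cseq]

lemma cB_rec (k : ℕ) (wb wf : ℝ) (i : ℕ) (x : ℂ) :
    2 * cB k wb wf (i+1) (x^2) =
      (wb : ℂ) * (cB k wb wf i x + cB k wb wf i (-x)) +
        (wf : ℂ) * x ^ 2 * (cB k wb wf i (x^6) - cB k wb wf i (-x^6)) + 2 * x ^ (2*k) := by
  have he := even_eval (cseq k wb wf i) x
  have ho := odd_eval (cseq k wb wf i) x
  simp only [cB, cseq, cstep, eval_add, eval_mul, eval_C, eval_pow, eval_X]
  rw [mul_add, mul_add, ← mul_assoc, mul_comm (2:ℂ) ((wb:ℂ)), mul_assoc, he,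
    ← mul_assoc, mul_comm (2:ℂ) ((wf:ℂ)), mul_assoc, ho, ← pow_mul]
  ring

lemma abs_pow_le_one {x : ℂ} (hx : ‖x‖ < 1) (m : ℕ) : ‖x ^ m‖ ≤ 1 := by
  rw [norm_pow]; exact pow_le_one₀ (norm_nonneg x) hx.le

lemma mem_disc_ops {x : ℂ} (hx : ‖x‖ < 1) :
    ‖-x‖ < 1 ∧ ‖x ^ 6‖ < 1 ∧ ‖-x ^ 6‖ < 1 := by
  have h6 : ‖x ^ 6‖ < 1 := by
    rw [norm_pow]; exact pow_lt_one₀ (norm_nonneg x) hx (by norm_num)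
  exact ⟨by rw [norm_neg]; exact hx, h6, by rw [norm_neg]; exact h6⟩

lemma cB_diff_bound (k : ℕ) (wb wf : ℝ) :
    ∀ i : ℕ, ∀ z : ℂ, ‖z‖ < 1 →
      ‖cB k wb wf (i+1) z - cB k wb wf i z‖
        ≤ (|wb| + |wf| + 2) * (|wb| + |wf|) ^ i := by
  intro i
  induction i with
  | zero =>
    intro z hz
    obtain ⟨x, hx2, habs⟩ := exists_sqrt z
    have hx : ‖x‖ < 1 := sqrt_lt_one (by rw [habs]; exact hz)
    have e1 := cB_rec k wb wf 0 x
    rw [hx2] at e1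
    simp only [cB_zero] at e1
    have hz0 : cB k wb wf 0 z = x ^ (2 * k) := by rw [cB_zero, ← hx2, ← pow_mul]
    have key : 2 * (cB k wb wf 1 z - cB k wb wf 0 z)
        = (wb:ℂ) * (x ^ k + (-x) ^ k) + (wf:ℂ) * x ^ 2 * ((x^6) ^ k - (-x^6) ^ k) := by
      rw [hz0]; linear_combination e1 - (↑wf * ((x^6) ^ k - (-x^6) ^ k)) * hx2
    obtain ⟨hneg, h6, hneg6⟩ := mem_disc_ops hx
    have hb := rhs_bound (wb := wb) (wf := wf) hx (abs_pow_le_one hx k)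
      (abs_pow_le_one hneg k) (abs_pow_le_one h6 k) (abs_pow_le_one hneg6 k) zero_le_one
    have h2 : ‖2 * (cB k wb wf 1 z - cB k wb wf 0 z)‖
        = 2 * ‖cB k wb wf 1 z - cB k wb wf 0 z‖ := by
      rw [norm_mul, Complex.norm_two]
    rw [key] at h2
    have := h2 ▸ hb
    have habsW : (0:ℝ) ≤ |wb| + |wf| := by positivity
    nlinarith [norm_nonneg (cB k wb wf 1 z - cB k wb wf 0 z)]
  | succ i ih =>
    intro z hz
    obtain ⟨x, hx2, habs⟩ := exists_sqrt z
    have hx : ‖x‖ < 1 := sqrt_lt_one (by rw [habs]; exact hz)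
    obtain ⟨hneg, h6, hneg6⟩ := mem_disc_ops hx
    have e1 := cB_rec k wb wf (i+1) x
    have e2 := cB_rec k wb wf i x
    rw [hx2] at e1 e2
    set Δ : ℂ → ℂ := fun t => cB k wb wf (i+1) t - cB k wb wf i t with hΔ
    have key : 2 * (cB k wb wf (i+2) z - cB k wb wf (i+1) z)
        = (wb:ℂ) * (Δ x + Δ (-x)) + (wf:ℂ) * x ^ 2 * (Δ (x^6) - Δ (-x^6)) := by
      simp only [hΔ]
      linear_combination e1 - e2 - (↑wf * ((cB k wb wf (i+1) (x^6) - cB k wb wf i (x^6)) - (cB k wb wf (i+1) (-x^6) - cB k wb wf i (-x^6)))) * hx2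
    set M : ℝ := (|wb| + |wf| + 2) * (|wb| + |wf|) ^ i with hM
    have hM0 : 0 ≤ M := by positivity
    have hb := rhs_bound (wb := wb) (wf := wf) hx (ih x hx) (ih (-x) hneg)
      (ih (x^6) h6) (ih (-x^6) hneg6) hM0
    have h2 : ‖2 * (cB k wb wf (i+2) z - cB k wb wf (i+1) z)‖
        = 2 * ‖cB k wb wf (i+2) z - cB k wb wf (i+1) z‖ := by
      rw [norm_mul, Complex.norm_two]
    rw [key] at h2
    have hfin := h2 ▸ hb
    have habsW : (0:ℝ) ≤ |wb| + |wf| := by positivity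
    have : (|wb| + |wf| + 2) * (|wb| + |wf|) ^ (i+1) = (|wb| + |wf|) * M := by
      rw [hM]; ring
    rw [this]
    nlinarith [norm_nonneg (cB k wb wf (i+2) z - cB k wb wf (i+1) z)]

section Limit
variable (k : ℕ) (wb wf : ℝ)

noncomputable def cf (z : ℂ) : ℂ := limUnder atTop (fun i => cB k wb wf i z)

variable {wb wf}

lemma cB_dist_step (i : ℕ) {z : ℂ} (hz : ‖z‖ < 1) :
    dist (cB k wb wf i z) (cB k wb wf (i+1) z) ≤ (|wb| + |wf| + 2) * (|wb| + |wf|) ^ i := by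
  rw [dist_comm, Complex.dist_eq]
  exact cB_diff_bound k wb wf i z hz

lemma cB_tendsto (hw : |wb| + |wf| < 1) {z : ℂ} (hz : ‖z‖ < 1) :
    Tendsto (fun i => cB k wb wf i z) atTop (nhds (cf k wb wf z)) :=
  (cauchySeq_of_le_geometric _ _ hw (fun i => cB_dist_step k i hz)).tendsto_limUnder

lemma cB_dist_cf (hw : |wb| + |wf| < 1) {z : ℂ} (hz : ‖z‖ < 1) (n : ℕ) :
    dist (cB k wb wf n z) (cf k wb wf z)
      ≤ (|wb| + |wf| + 2) * (|wb| + |wf|) ^ n / (1 - (|wb| + |wf|)) :=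
  dist_le_of_le_geometric_of_tendsto _ _ hw (fun i => cB_dist_step k i hz)
    (cB_tendsto k hw hz) n

lemma cB_unif (hw : |wb| + |wf| < 1) :
    TendstoUniformlyOn (cB k wb wf) (cf k wb wf) atTop openUnitDisc := by
  rw [Metric.tendstoUniformlyOn_iff]
  intro ε hε
  have h0 : (0:ℝ) ≤ |wb| + |wf| := by positivity
  have htend : Tendsto (fun n : ℕ => (|wb| + |wf| + 2) * (|wb| + |wf|) ^ n / (1 - (|wb| + |wf|)))
      atTop (nhds 0) := by
    have := (tendsto_pow_atTop_nhds_zero_of_lt_one h0 hw).const_mul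
      ((|wb| + |wf| + 2) / (1 - (|wb| + |wf|)))
    rw [mul_zero] at this
    refine this.congr fun n => by ring
  filter_upwards [htend.eventually (gt_mem_nhds hε)] with n hn
  intro x hx
  have := cB_dist_cf k hw hx n
  rw [dist_comm]
  exact lt_of_le_of_lt this hn

end Limit

section Sol
variable (k : ℕ) {wb wf : ℝ}

lemma cf_isSolution (hw : |wb| + |wf| < 1) : IsSolution k wb wf (cf k wb wf) := by
  have hdisc : ∀ x : ℂ, ‖x‖ < 1 → ‖x ^ 2‖ < 1 := by
    intro x hx
    rw [norm_pow]
    exact pow_lt_one₀ (norm_nonneg x) hx (by norm_num)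
  refine ⟨?_, ?_, ?_⟩
  · refine DifferentiableOn.analyticOnNhd ?_ isOpen_openUnitDisc
    refine TendstoLocallyUniformlyOn.differentiableOn
      ((cB_unif k hw).tendstoLocallyUniformlyOn) ?_ isOpen_openUnitDisc
    exact Eventually.of_forall fun i =>
      ((cseq k wb wf i).differentiable).differentiableOn
  · refine ⟨(|wb| + |wf| + 2) / (1 - (|wb| + |wf|)) + 1, fun z hz => ?_⟩
    have h1 := cB_dist_cf k hw hz 0
    have h2 : ‖cB k wb wf 0 z‖ ≤ 1 := by
      rw [cB_zero]; exact abs_pow_le_one hz k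
    have h3 : ‖cf k wb wf z‖
        ≤ ‖cB k wb wf 0 z‖ + dist (cB k wb wf 0 z) (cf k wb wf z) := by
      rw [Complex.dist_eq]
      calc ‖cf k wb wf z‖
          = ‖cB k wb wf 0 z - (cB k wb wf 0 z - cf k wb wf z)‖ := by ring_nf
        _ ≤ _ := norm_sub_le _ _
    have h4 : (|wb| + |wf| + 2) * (|wb| + |wf|) ^ 0 / (1 - (|wb| + |wf|))
        = (|wb| + |wf| + 2) / (1 - (|wb| + |wf|)) := by ring
    rw [h4] at h1
    linarith
  · intro x hx
    obtain ⟨hneg, h6, hneg6⟩ := mem_disc_ops hx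
    have hx2 := hdisc x hx
    have L : Tendsto (fun i => 2 * cB k wb wf (i+1) (x^2)) atTop
        (nhds (2 * cf k wb wf (x^2))) := by
      exact (((cB_tendsto k hw hx2).comp (tendsto_add_atTop_nat 1)).const_mul 2)
    have R : Tendsto (fun i =>
        (wb : ℂ) * (cB k wb wf i x + cB k wb wf i (-x)) +
          (wf : ℂ) * x ^ 2 * (cB k wb wf i (x^6) - cB k wb wf i (-x^6)) + 2 * x ^ (2*k))
        atTop (nhds ((wb : ℂ) * (cf k wb wf x + cf k wb wf (-x)) +
          (wf : ℂ) * x ^ 2 * (cf k wb wf (x^6) - cf k wb wf (-x^6)) + 2 * x ^ (2*k))) := by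
      exact ((((cB_tendsto k hw hx).add (cB_tendsto k hw hneg)).const_mul _).add
        (((cB_tendsto k hw h6).sub (cB_tendsto k hw hneg6)).const_mul _)).add tendsto_const_nhds
    have heq : (fun i => 2 * cB k wb wf (i+1) (x^2)) = (fun i =>
        (wb : ℂ) * (cB k wb wf i x + cB k wb wf i (-x)) +
          (wf : ℂ) * x ^ 2 * (cB k wb wf i (x^6) - cB k wb wf i (-x^6)) + 2 * x ^ (2*k)) := by
      funext i; exact cB_rec k wb wf i x
    rw [heq] at L
    exact tendsto_nhds_unique L R

lemma sol_unique (hw : |wb| + |wf| < 1) {f g : ℂ → ℂ} (hf : IsSolution k wb wf f) (hg : IsSolution k wb wf g) :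
    Set.EqOn g f openUnitDisc := by
  obtain ⟨-, ⟨Cf, hCf⟩, hfe⟩ := hf
  obtain ⟨-, ⟨Cg, hCg⟩, hge⟩ := hg
  have h0disc : (0:ℂ) ∈ openUnitDisc := by simp [openUnitDisc]
  set S := (fun z => ‖g z - f z‖) '' openUnitDisc with hS
  have hSne : S.Nonempty := ⟨_, ⟨0, h0disc, rfl⟩⟩
  have hSbd : BddAbove S := by
    refine ⟨Cg + Cf, ?_⟩
    rintro _ ⟨z, hz, rfl⟩
    calc ‖g z - f z‖ ≤ ‖g z‖ + ‖f z‖ :=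
          norm_sub_le _ _
      _ ≤ Cg + Cf := add_le_add (hCg z hz) (hCf z hz)
  set M := sSup S with hM
  have hle : ∀ z ∈ openUnitDisc, ‖g z - f z‖ ≤ M :=
    fun z hz => le_csSup hSbd ⟨z, hz, rfl⟩
  have hM0 : 0 ≤ M := le_trans (norm_nonneg _) (hle 0 h0disc)
  have key : ∀ z ∈ openUnitDisc, ‖g z - f z‖ ≤ (|wb| + |wf|) * M := by
    intro z hz
    obtain ⟨x, hx2, habs⟩ := exists_sqrt z
    have hx : ‖x‖ < 1 := sqrt_lt_one (by rw [habs]; exact hz)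
    obtain ⟨hneg, h6, hneg6⟩ := mem_disc_ops hx
    have e1 := hge x hx
    have e2 := hfe x hx
    rw [hx2] at e1 e2
    have keyz : 2 * (g z - f z)
        = (wb:ℂ) * ((g x - f x) + (g (-x) - f (-x))) +
          (wf:ℂ) * x ^ 2 * ((g (x^6) - f (x^6)) - (g (-x^6) - f (-x^6))) := by
      linear_combination e1 - e2 - (↑wf * ((g (x^6) - f (x^6)) - (g (-x^6) - f (-x^6)))) * hx2
    have hb := rhs_bound (wb := wb) (wf := wf) hx (hle x hx) (hle (-x) hneg)
      (hle (x^6) h6) (hle (-x^6) hneg6) hM0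
    have h2 : ‖2 * (g z - f z)‖ = 2 * ‖g z - f z‖ := by
      rw [norm_mul, Complex.norm_two]
    rw [keyz] at h2
    have hfin := h2 ▸ hb
    linarith
  have hMle : M ≤ (|wb| + |wf|) * M := by
    refine csSup_le hSne ?_
    rintro _ ⟨z, hz, rfl⟩
    exact key z hz
  have hMz : M = 0 := by nlinarith [hMle, hM0, hw]
  intro z hz
  have := hle z hz
  rw [hMz] at this
  have := le_antisymm this (norm_nonneg _)
  have := norm_eq_zero.1 this
  exact sub_eq_zero.1 this

end Sol

lemma seq_unique (k : ℕ) (wb wf : ℝ) (A : ℕ → ℂ → ℂ)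
    (h0 : ∀ x : ℂ, A 0 x = x ^ k)
    (hrec : ∀ i : ℕ, ∀ x : ℂ,
      2 * A (i + 1) (x ^ 2) =
        (wb : ℂ) * (A i x + A i (-x)) + (wf : ℂ) * x ^ 2 * (A i (x ^ 6) - A i (-x ^ 6)) +
          2 * x ^ (2 * k)) :
    ∀ i : ℕ, ∀ x : ℂ, A i x = cB k wb wf i x := by
  intro i
  induction i with
  | zero => intro x; rw [h0, cB_zero]
  | succ i ih =>
    intro y
    obtain ⟨x, hx2, -⟩ := exists_sqrt y
    have h1 := hrec i x
    have h2 := cB_rec k wb wf i x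
    rw [hx2] at h1 h2
    rw [ih x, ih (-x), ih (x^6), ih (-x^6)] at h1
    exact mul_left_cancel₀ two_ne_zero (h1.trans h2.symm)

theorem stmt_17 (k : ℕ) (wb wf : ℝ) (hk : 1 ≤ k) (hw : |wb| + |wf| < 1) :
    (∃ A : ℕ → ℂ → ℂ,
      (∀ i : ℕ, ∃ p : Polynomial ℂ, ∀ x : ℂ, A i x = p.eval x) ∧
      (∀ x : ℂ, A 0 x = x ^ k) ∧
      (∀ i : ℕ, ∀ x : ℂ,
        2 * A (i + 1) (x ^ 2) =
          (wb : ℂ) * (A i x + A i (-x)) + (wf : ℂ) * x ^ 2 * (A i (x ^ 6) - A i (-x ^ 6)) +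
            2 * x ^ (2 * k))) ∧
    (∃ f : ℂ → ℂ, IsSolution k wb wf f ∧
      ∀ g : ℂ → ℂ, IsSolution k wb wf g → Set.EqOn g f openUnitDisc) ∧
    ∀ A : ℕ → ℂ → ℂ,
      ((∀ i : ℕ, ∃ p : Polynomial ℂ, ∀ x : ℂ, A i x = p.eval x) ∧
        (∀ x : ℂ, A 0 x = x ^ k) ∧
        (∀ i : ℕ, ∀ x : ℂ,
          2 * A (i + 1) (x ^ 2) =
            (wb : ℂ) * (A i x + A i (-x)) + (wf : ℂ) * x ^ 2 * (A i (x ^ 6) - A i (-x ^ 6)) +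
              2 * x ^ (2 * k))) →
      ∀ f : ℂ → ℂ, IsSolution k wb wf f →
        TendstoUniformlyOn A f Filter.atTop openUnitDisc := by
  refine ⟨⟨cB k wb wf, fun i => ⟨cseq k wb wf i, fun x => rfl⟩, cB_zero k wb wf,
      fun i x => cB_rec k wb wf i x⟩, ⟨cf k wb wf, cf_isSolution k hw,
      fun g hg => sol_unique k hw (cf_isSolution k hw) hg⟩, ?_⟩
  rintro A ⟨-, h0, hrec⟩ f hf
  have hA : ∀ i x, A i x = cB k wb wf i x := seq_unique k wb wf A h0 hrec
  have h1 : TendstoUniformlyOn A (cf k wb wf) Filter.atTop openUnitDisc :=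
    (cB_unif k hw).congr (Eventually.of_forall fun i z _ => (hA i z).symm)
  exact h1.congr_right (sol_unique k hw (cf_isSolution k hw) hf).symm
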